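/- Let r>0, ρ>0, α∈(0,1], δ>0, γ>0 with γ≠1, x ≥ x̲, and let x_α ≥ x̲. Let v:[x̲,∞)→ℝ be increasing and assume either (a) γ>1 and α^{1−γ}/(δ(1−γ)) ≤ v(ξ) < 0 for all ξ ≥ x̲, or (b) 0<γ<1, v is continuously differentiable on (x̲,∞), v(x̲) = α^{1−γ}/(δ(1−γ)), and 0 < v'(ξ) < α^{−γ}/(1+ρξ) for all ξ > x_α. Then for every admissible control c ∈ A(x) with state process X, one has lim_{T→∞} e^{−δT}·v(X(T)) = 0. -/

import Mathlib

open Topology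

/-- The integral equation for the wealth-to-habit (state) process `X`. -/
def StateEqn (r ρ x : ℝ) (c X : ℝ → ℝ) : Prop :=
  ∀ t : ℝ, 0 ≤ t → X t = x + ∫ u in (0:ℝ)..t, ((r + ρ) * X u - (1 + ρ * X u) * c u)

/-- Membership in the admissible class `A(x)` of consumption-to-habit policies,
together with its state process `X`. -/
def Admissible (r ρ α xlow x : ℝ) (c X : ℝ → ℝ) : Prop :=
  Measurable c ∧ (∀ t, 0 ≤ t → α ≤ c t) ∧
  (∀ T, 0 < T → MeasureTheory.IntegrableOn c (Set.Icc 0 T)) ∧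
  StateEqn r ρ x c X ∧ (∀ t, 0 ≤ t → xlow ≤ X t)

open MeasureTheory in
/-- Exponential bound on the state process. -/
lemma state_bound (r ρ α x xl : ℝ) (hxl : 0 < xl) (hρ : 0 ≤ ρ) (hα : 0 < α)
    (hx : xl ≤ x) (hk : 0 ≤ r + ρ)
    (c X : ℝ → ℝ) (hc : ∀ t, 0 ≤ t → α ≤ c t)
    (hstate : StateEqn r ρ x c X) (hX : ∀ t, 0 ≤ t → xl ≤ X t) :
    ∀ T, 0 ≤ T → X T ≤ x * Real.exp ((r + ρ) * T) := by
  intro T hT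
  have hx0 : 0 < x := lt_of_lt_of_le hxl hx
  have hexp1 : 1 ≤ Real.exp ((r + ρ) * T) := Real.one_le_exp (by positivity)
  by_cases hint :
      IntervalIntegrable (fun u => (r + ρ) * X u - (1 + ρ * X u) * c u) volume 0 T
  · -- g is integrable on [0,T]
    have hgsub : ∀ t ∈ Set.Icc (0:ℝ) T,
        IntervalIntegrable (fun u => (r + ρ) * X u - (1 + ρ * X u) * c u) volume 0 t := by
      intro t ht
      exact hint.mono_set (by
        rw [Set.uIcc_of_le ht.1, Set.uIcc_of_le hT]
        exact Set.Icc_subset_Icc le_rfl ht.2)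
    have hXeq : ∀ t ∈ Set.Icc (0:ℝ) T,
        X t = x + ∫ u in (0:ℝ)..t, ((r + ρ) * X u - (1 + ρ * X u) * c u) :=
      fun t ht => hstate t ht.1
    have hprim : ContinuousOn
        (fun t => ∫ u in (0:ℝ)..t, ((r + ρ) * X u - (1 + ρ * X u) * c u)) (Set.Icc 0 T) := by
      have := intervalIntegral.continuousOn_primitive_interval' hint
        (Set.left_mem_uIcc)
      rwa [Set.uIcc_of_le hT] at this
    have hXcont : ContinuousOn X (Set.Icc 0 T) :=
      (continuousOn_const.add hprim).congr hXeq
    -- clamp X to a globally continuous function Y agreeing with X on [0,T]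
    set π : ℝ → ℝ := fun t => max 0 (min t T) with hπdef
    have hπcont : Continuous π := continuous_const.max (continuous_id.min continuous_const)
    have hπmem : ∀ t, π t ∈ Set.Icc (0:ℝ) T :=
      fun t => ⟨le_max_left _ _, max_le hT (min_le_right _ _)⟩
    set Y : ℝ → ℝ := fun t => X (π t) with hYdef
    have hYcont : Continuous Y := hXcont.comp_continuous hπcont hπmem
    have hYX : ∀ t ∈ Set.Icc (0:ℝ) T, Y t = X t := by
      intro t ht
      simp only [hYdef, hπdef]
      rw [min_eq_left ht.2, max_eq_right ht.1]
    set u : ℝ → ℝ := fun t => ∫ s in (0:ℝ)..t, (r + ρ) * Y s with hudef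
    have hYint : ∀ a b : ℝ, IntervalIntegrable (fun s => (r + ρ) * Y s) volume a b :=
      fun a b => (continuous_const.mul hYcont).intervalIntegrable a b
    have huderiv : ∀ t : ℝ, HasDerivAt u ((r + ρ) * Y t) t := fun t =>
      intervalIntegral.integral_hasDerivAt_right (hYint 0 t)
        ((continuous_const.mul hYcont).stronglyMeasurableAtFilter volume (𝓝 t))
        (continuous_const.mul hYcont).continuousAt
    -- key integral inequality
    have hkey : ∀ t ∈ Set.Icc (0:ℝ) T, X t ≤ x + u t := by
      intro t ht
      rw [hXeq t ht]
      have h1 : (∫ s in (0:ℝ)..t, ((r + ρ) * X s - (1 + ρ * X s) * c s))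
          ≤ ∫ s in (0:ℝ)..t, (r + ρ) * Y s := by
        apply intervalIntegral.integral_mono_on ht.1 (hgsub t ht) (hYint 0 t)
        intro s hs
        have hs' : s ∈ Set.Icc (0:ℝ) T := ⟨hs.1, hs.2.trans ht.2⟩
        rw [hYX s hs']
        have hXs := hX s hs.1
        have h2 : 0 ≤ (1 + ρ * X s) * c s :=
          mul_nonneg (by nlinarith) (hα.le.trans (hc s hs.1))
        linarith
      linarith
    -- the integrating-factor function ψ is antitone
    set ψ : ℝ → ℝ := fun t => Real.exp (-((r + ρ) * t)) * (x + u t) with hψdef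
    have hψderiv : ∀ t : ℝ, HasDerivAt ψ
        (Real.exp (-((r + ρ) * t)) * (-(r + ρ)) * (x + u t)
          + Real.exp (-((r + ρ) * t)) * ((r + ρ) * Y t)) t := by
      intro t
      have h1 : HasDerivAt (fun s : ℝ => Real.exp (-((r + ρ) * s)))
          (Real.exp (-((r + ρ) * t)) * (-(r + ρ))) t := by
        have hinner : HasDerivAt (fun s : ℝ => -((r + ρ) * s)) (-(r + ρ)) t := by
          exact (((hasDerivAt_id t).const_mul (r + ρ)).neg).congr_deriv (by ring)
        exact (Real.hasDerivAt_exp (-((r + ρ) * t))).comp t hinner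
      have h2 : HasDerivAt (fun s => x + u s) ((r + ρ) * Y t) t := by
        exact ((hasDerivAt_const t x).add (huderiv t)).congr_deriv (by ring)
      exact h1.mul h2
    have hψanti : AntitoneOn ψ (Set.Icc 0 T) := by
      apply antitoneOn_of_deriv_nonpos (convex_Icc 0 T)
      · exact (continuous_iff_continuousAt.2 fun t =>
          (hψderiv t).differentiableAt.continuousAt).continuousOn
      · exact fun t _ => (hψderiv t).differentiableAt.differentiableWithinAt
      · intro t ht
        rw [interior_Icc] at ht
        rw [(hψderiv t).deriv]
        have ht' : t ∈ Set.Icc (0:ℝ) T := ⟨ht.1.le, ht.2.le⟩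
        have hYle : Y t ≤ x + u t := by rw [hYX t ht']; exact hkey t ht'
        have hE : 0 < Real.exp (-((r + ρ) * t)) := Real.exp_pos _
        nlinarith [mul_nonneg (mul_nonneg hk hE.le) (sub_nonneg.mpr hYle)]
    have h0T : ψ T ≤ ψ 0 := hψanti ⟨le_rfl, hT⟩ ⟨hT, le_rfl⟩ hT
    have hu0 : u 0 = 0 := intervalIntegral.integral_same
    have hψ0 : ψ 0 = x := by simp [hψdef, hu0]
    rw [hψ0] at h0T
    have h3 : x + u T ≤ Real.exp ((r + ρ) * T) * x := by
      have h4 := mul_le_mul_of_nonneg_left h0T (Real.exp_nonneg ((r + ρ) * T))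
      rw [hψdef] at h4
      simp only at h4
      rwa [← mul_assoc, ← Real.exp_add, add_neg_cancel, Real.exp_zero, one_mul] at h4
    have hXT : X T ≤ x + u T := hkey T ⟨hT, le_rfl⟩
    nlinarith
  · -- junk case: integral is 0
    have hXT := hstate T hT
    rw [intervalIntegral.integral_undef hint] at hXT
    nlinarith

set_option maxHeartbeats 1600000 in
theorem transversality (r ρ α δ γ x xα : ℝ)
    (hr : 0 < r) (hρ : 0 < ρ) (hα : α ∈ Set.Ioc (0:ℝ) 1)
    (hδ : 0 < δ) (hγ : 0 < γ) (hγ1 : γ ≠ 1)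
    (hx : α / (r + ρ * (1 - α)) ≤ x) (hxα : α / (r + ρ * (1 - α)) ≤ xα)
    (v : ℝ → ℝ)
    (hv_mono : MonotoneOn v (Set.Ici (α / (r + ρ * (1 - α)))))
    (hcases :
      (1 < γ ∧ ∀ ξ : ℝ, α / (r + ρ * (1 - α)) ≤ ξ →
        α ^ (1 - γ) / (δ * (1 - γ)) ≤ v ξ ∧ v ξ < 0) ∨
      (γ < 1 ∧
        (∀ ξ : ℝ, α / (r + ρ * (1 - α)) < ξ → ContDiffAt ℝ 1 v ξ) ∧
        v (α / (r + ρ * (1 - α))) = α ^ (1 - γ) / (δ * (1 - γ)) ∧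
        (∀ ξ : ℝ, xα < ξ →
          0 < deriv v ξ ∧ deriv v ξ < α ^ (-γ) / (1 + ρ * ξ))))
    (c X : ℝ → ℝ)
    (hadm : Admissible r ρ α (α / (r + ρ * (1 - α))) x c X) :
    Filter.Tendsto (fun T => Real.exp (-(δ * T)) * v (X T)) Filter.atTop (𝓝 0) := by
  obtain ⟨hc_meas, hc_low, hc_int, hstate, hXlow⟩ := hadm
  set xl := α / (r + ρ * (1 - α)) with hxl_def
  have hden : 0 < r + ρ * (1 - α) := by nlinarith [hα.1, hα.2]
  have hxl_pos : 0 < xl := div_pos hα.1 hden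
  have hx0 : 0 < x := hxl_pos.trans_le hx
  have hXbd : ∀ T, 0 ≤ T → X T ≤ x * Real.exp ((r + ρ) * T) :=
    state_bound r ρ α x xl hxl_pos hρ.le hα.1 hx (by linarith) c X hc_low hstate hXlow
  have hlow : ∀ T : ℝ, 0 ≤ T → v xl ≤ v (X T) := fun T hT =>
    hv_mono Set.self_mem_Ici (hXlow T hT) (hXlow T hT)
  obtain ⟨A, B, hB, hub⟩ : ∃ A B : ℝ, 0 ≤ B ∧ ∀ T : ℝ, 0 ≤ T → v (X T) ≤ A + B * T := by
    rcases hcases with ⟨hγ1', hbd⟩ | ⟨hγ1', hvC1, hvxl, hvderiv⟩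
    · exact ⟨0, 0, le_rfl, fun T hT => by
        simpa using (hbd (X T) (hXlow T hT)).2.le⟩
    · -- logarithmic growth case
      set B0 : ℝ := α ^ (-γ) / ρ with hB0def
      have hB0 : 0 < B0 := div_pos (Real.rpow_pos_of_pos hα.1 _) hρ
      set ξ1 : ℝ := max xα xl + 1 with hξ1def
      have hξ1α : xα < ξ1 := lt_of_le_of_lt (le_max_left _ _) (by linarith [le_max_left xα xl])
      have hξ1xl : xl < ξ1 := lt_of_le_of_lt (le_max_right _ _) (by linarith [le_max_right xα xl])
      have hξ1pos : 0 < ξ1 := hxl_pos.trans hξ1xl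
      set w : ℝ → ℝ := fun ξ => v ξ - B0 * Real.log (1 + ρ * ξ) with hwdef
      have hlogderiv : ∀ ξ : ℝ, 0 < ξ →
          HasDerivAt (fun ξ => Real.log (1 + ρ * ξ)) (ρ / (1 + ρ * ξ)) ξ := by
        intro ξ hξ
        have hpos : (0:ℝ) < 1 + ρ * ξ := by nlinarith
        have hinner : HasDerivAt (fun ξ : ℝ => 1 + ρ * ξ) ρ ξ := by
          simpa using ((hasDerivAt_id ξ).const_mul ρ).const_add 1
        have := (Real.hasDerivAt_log hpos.ne').comp ξ hinner
        exact this.congr_deriv (by ring)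
      have hwanti : AntitoneOn w (Set.Ici ξ1) := by
        apply antitoneOn_of_deriv_nonpos (convex_Ici ξ1)
        · intro ξ hξ
          have hξxl : xl < ξ := lt_of_lt_of_le hξ1xl hξ
          have hv' := ((hvC1 ξ hξxl).differentiableAt one_ne_zero).continuousAt
          have hlog' := ((hlogderiv ξ (hξ1pos.trans_le hξ)).differentiableAt).continuousAt
          exact (hv'.sub (continuousAt_const.mul hlog')).continuousWithinAt
        · intro ξ hξ
          rw [interior_Ici] at hξ
          have hξxl : xl < ξ := hξ1xl.trans hξ
          have hv' := ((hvC1 ξ hξxl).differentiableAt one_ne_zero)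
          exact (hv'.sub (((hlogderiv ξ (hξ1pos.trans hξ)).differentiableAt).const_mul
            B0)).differentiableWithinAt
        · intro ξ hξ
          rw [interior_Ici] at hξ
          have hξxl : xl < ξ := hξ1xl.trans hξ
          have hξpos : 0 < ξ := hξ1pos.trans hξ
          have hpos : (0:ℝ) < 1 + ρ * ξ := by nlinarith
          have hv' : HasDerivAt v (deriv v ξ) ξ :=
            ((hvC1 ξ hξxl).differentiableAt one_ne_zero).hasDerivAt
          have hw' : HasDerivAt w (deriv v ξ - B0 * (ρ / (1 + ρ * ξ))) ξ :=
            hv'.sub ((hlogderiv ξ hξpos).const_mul B0)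
          rw [hw'.deriv]
          have hd := (hvderiv ξ (hξ1α.trans hξ)).2
          have heq : B0 * (ρ / (1 + ρ * ξ)) = α ^ (-γ) / (1 + ρ * ξ) := by
            rw [hB0def]; field_simp
          rw [heq]
          linarith
      -- extract the linear-in-T upper bound
      refine ⟨v ξ1 + B0 * Real.log (1 + ρ * ξ1 + ρ * x), B0 * (r + ρ), by positivity,
        fun T hT => ?_⟩
      have hXT := hXbd T hT
      have hexpT : 1 ≤ Real.exp ((r + ρ) * T) := Real.one_le_exp (by positivity)
      set M : ℝ := max ξ1 (x * Real.exp ((r + ρ) * T)) with hMdef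
      have hMξ1 : ξ1 ≤ M := le_max_left _ _
      have hXM : X T ≤ M := hXT.trans (le_max_right _ _)
      have hMxl : xl ≤ M := hξ1xl.le.trans hMξ1
      have hvXM : v (X T) ≤ v M :=
        hv_mono (Set.mem_Ici.mpr (hXlow T hT)) (Set.mem_Ici.mpr hMxl) hXM
      have hwM := hwanti (Set.self_mem_Ici) (Set.mem_Ici.mpr hMξ1) hMξ1
      simp only [hwdef] at hwM
      have hlogξ1 : 0 ≤ Real.log (1 + ρ * ξ1) := Real.log_nonneg (by nlinarith)
      have hMbound : M ≤ ξ1 + x * Real.exp ((r + ρ) * T) := by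
        apply max_le
        · nlinarith [Real.exp_pos ((r + ρ) * T)]
        · nlinarith
      have hMpos : 0 < 1 + ρ * M := by nlinarith [hξ1pos.trans_le hMξ1]
      have h1 : 1 + ρ * M ≤ (1 + ρ * ξ1 + ρ * x) * Real.exp ((r + ρ) * T) := by
        nlinarith [mul_nonneg (sub_nonneg.mpr hexpT) (by positivity : (0:ℝ) ≤ 1 + ρ * ξ1),
          mul_le_mul_of_nonneg_left hMbound hρ.le]
      have hlogM : Real.log (1 + ρ * M) ≤ Real.log (1 + ρ * ξ1 + ρ * x) + (r + ρ) * T := by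
        calc Real.log (1 + ρ * M)
            ≤ Real.log ((1 + ρ * ξ1 + ρ * x) * Real.exp ((r + ρ) * T)) :=
              Real.log_le_log hMpos h1
          _ = Real.log (1 + ρ * ξ1 + ρ * x) + (r + ρ) * T := by
              rw [Real.log_mul (by positivity) (Real.exp_ne_zero _), Real.log_exp]
      have h5 := mul_le_mul_of_nonneg_left hlogM hB0.le
      have h6 := mul_nonneg hB0.le hlogξ1
      nlinarith
  -- squeeze argument
  have hδT : Filter.Tendsto (fun T : ℝ => -(δ * T)) Filter.atTop Filter.atBot := by
    exact Filter.tendsto_neg_atBot_iff.mpr (Filter.Tendsto.const_mul_atTop hδ Filter.tendsto_id)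
  have hexp0 : Filter.Tendsto (fun T : ℝ => Real.exp (-(δ * T))) Filter.atTop (𝓝 0) :=
    Real.tendsto_exp_atBot.comp hδT
  have hTexp0 : Filter.Tendsto (fun T : ℝ => T * Real.exp (-(δ * T))) Filter.atTop (𝓝 0) := by
    have h1 : Filter.Tendsto (fun T : ℝ => δ * T) Filter.atTop Filter.atTop :=
      Filter.Tendsto.const_mul_atTop hδ Filter.tendsto_id
    have h2 := (Real.tendsto_pow_mul_exp_neg_atTop_nhds_zero 1).comp h1
    have h3 := h2.const_mul (1 / δ)
    simp only [mul_zero] at h3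
    refine h3.congr fun T => ?_
    simp only [Function.comp_apply, pow_one]
    field_simp
  have hlower : Filter.Tendsto (fun T : ℝ => Real.exp (-(δ * T)) * v xl)
      Filter.atTop (𝓝 0) := by simpa using hexp0.mul_const (v xl)
  have hupper : Filter.Tendsto (fun T : ℝ => Real.exp (-(δ * T)) * (A + B * T))
      Filter.atTop (𝓝 0) := by
    have := (hexp0.const_mul A).add (hTexp0.const_mul B)
    simp only [mul_zero, add_zero] at this
    refine this.congr fun T => ?_
    ring
  apply tendsto_of_tendsto_of_tendsto_of_le_of_le' hlower hupper
  · filter_upwards [Filter.eventually_ge_atTop (0:ℝ)] with T hT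
    exact mul_le_mul_of_nonneg_left (hlow T hT) (Real.exp_nonneg _)
  · filter_upwards [Filter.eventually_ge_atTop (0:ℝ)] with T hT
    exact mul_le_mul_of_nonneg_left (hub T hT) (Real.exp_nonneg _)
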